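/- Let (X, 𝒜, μ) be a measure space and D ⊆ ℝ a set of parameter values. For each θ' ∈ D let p(·;θ'): X → ℝ be measurable with p(·;θ') ≥ 0 and ∫ p(x;θ') dμ(x) = 1. Fix θ ∈ D with p(x;θ) > 0 for μ-a.e. x, and let g: X → ℝ be an unbiased estimator (∫ p(x;θ')|g(x)| dμ(x) < ∞ and ∫ p(x;θ') g(x) dμ(x) = θ' for every θ' ∈ D) with ∫ p(x;θ)(g(x)−θ)² dμ(x) < ∞. Then for any θ₁, θ₂ ∈ D such that 0 < ∫ (p(x;θ₁) − p(x;θ₂))²/p(x;θ) dμ(x) < ∞, it holds that ∫ p(x;θ)(g(x)−θ)² dμ(x) ≥ (θ₁ − θ₂)² / ∫ (p(x;θ₁) − p(x;θ₂))²/p(x;θ) dμ(x). -/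

import Mathlib

open MeasureTheory

/-- Single-constraint version of Lower Bounds Series A, generalizing both the Cramér–Rao
bound and the Chapman–Robbins bound: the mean-squared error of any unbiased estimator is
at least `(θ₁ - θ₂)² / ∫ (p(x;θ₁) - p(x;θ₂))² / p(x;θ) dμ`. -/
theorem lower_bound_single_constraint {X : Type*} [MeasurableSpace X]
    (μ : Measure X) (D : Set ℝ)
    (p : ℝ → X → ℝ)
    (hpm : ∀ θ' ∈ D, Measurable (p θ'))
    (hp0 : ∀ θ' ∈ D, ∀ x, 0 ≤ p θ' x)
    (hp1 : ∀ θ' ∈ D, ∫ x, p θ' x ∂μ = 1)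
    (θ : ℝ) (hθ : θ ∈ D) (hθpos : ∀ᵐ x ∂μ, 0 < p θ x)
    (g : X → ℝ) (hgm : Measurable g)
    (hgint : ∀ θ' ∈ D, Integrable (fun x => p θ' x * g x) μ)
    (hunbiased : ∀ θ' ∈ D, ∫ x, p θ' x * g x ∂μ = θ')
    (hmse : Integrable (fun x => p θ x * (g x - θ)^2) μ)
    (θ₁ θ₂ : ℝ) (hθ₁ : θ₁ ∈ D) (hθ₂ : θ₂ ∈ D)
    (hchi_int : Integrable (fun x => (p θ₁ x - p θ₂ x)^2 / p θ x) μ)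
    (hchi_pos : 0 < ∫ x, (p θ₁ x - p θ₂ x)^2 / p θ x ∂μ) :
    (θ₁ - θ₂)^2 / ∫ x, (p θ₁ x - p θ₂ x)^2 / p θ x ∂μ
      ≤ ∫ x, p θ x * (g x - θ)^2 ∂μ := by
  set A := ∫ x, p θ x * (g x - θ)^2 ∂μ with hAdef
  set B := ∫ x, (p θ₁ x - p θ₂ x)^2 / p θ x ∂μ with hBdef
  -- integrability of the densities themselves
  have hpint : ∀ θ' ∈ D, Integrable (p θ') μ := by
    intro θ' hθ'
    by_contra h
    have h0 := integral_undef h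
    rw [hp1 θ' hθ'] at h0
    norm_num at h0
  -- the cross term f = (p₁ - p₂)(g - θ)
  set f : X → ℝ := fun x => (p θ₁ x - p θ₂ x) * (g x - θ) with hfdef
  have hfm : Measurable f :=
    ((hpm θ₁ hθ₁).sub (hpm θ₂ hθ₂)).mul (hgm.sub measurable_const)
  have hfint : Integrable f μ := by
    refine Integrable.mono' ((hmse.add hchi_int).div_const 2) hfm.aestronglyMeasurable ?_
    filter_upwards [hθpos] with x hx
    show ‖(p θ₁ x - p θ₂ x) * (g x - θ)‖ ≤
      (p θ x * (g x - θ) ^ 2 + (p θ₁ x - p θ₂ x) ^ 2 / p θ x) / 2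
    rw [Real.norm_eq_abs]
    set u := p θ₁ x - p θ₂ x with hu
    set v := g x - θ with hv
    set q := p θ x with hqd
    have hq : (0 : ℝ) < q := hx
    clear_value u v q
    have h2 : 2 * q * |u * v| ≤ q ^ 2 * v ^ 2 + u ^ 2 := by
      rcases abs_cases (u * v) with ⟨he, _⟩ | ⟨he, _⟩ <;> rw [he] <;>
        nlinarith [sq_nonneg (q * v - u), sq_nonneg (q * v + u)]
    have hdiv : u ^ 2 / q * q = u ^ 2 := div_mul_cancel₀ _ hq.ne'
    rw [le_div_iff₀ (by norm_num : (0:ℝ) < 2), ← mul_le_mul_iff_right₀ hq]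
    have h3 : q * (q * v ^ 2 + u ^ 2 / q) = q ^ 2 * v ^ 2 + u ^ 2 := by
      field_simp
    linarith [h2, h3]
  -- ∫ f = θ₁ - θ₂
  have hC : ∫ x, f x ∂μ = θ₁ - θ₂ := by
    have heq : ∀ x, f x =
        (p θ₁ x * g x - p θ₂ x * g x) - θ * (p θ₁ x - p θ₂ x) := by
      intro x; simp only [hfdef]; ring
    calc ∫ x, f x ∂μ
        = ∫ x, ((p θ₁ x * g x - p θ₂ x * g x) - θ * (p θ₁ x - p θ₂ x)) ∂μ := by
          exact integral_congr_ae (Filter.Eventually.of_forall heq)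
      _ = (∫ x, (p θ₁ x * g x - p θ₂ x * g x) ∂μ)
            - ∫ x, θ * (p θ₁ x - p θ₂ x) ∂μ := by
          exact integral_sub ((hgint θ₁ hθ₁).sub (hgint θ₂ hθ₂))
            (((hpint θ₁ hθ₁).sub (hpint θ₂ hθ₂)).const_mul θ)
      _ = θ₁ - θ₂ := by
          rw [integral_sub (hgint θ₁ hθ₁) (hgint θ₂ hθ₂), integral_const_mul,
            integral_sub (hpint θ₁ hθ₁) (hpint θ₂ hθ₂),
            hunbiased θ₁ hθ₁, hunbiased θ₂ hθ₂, hp1 θ₁ hθ₁, hp1 θ₂ hθ₂]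
          ring
  -- key inequality with t = (θ₁ - θ₂) / B
  set t := (θ₁ - θ₂) / B with htdef
  have key : 2 * t * (θ₁ - θ₂) ≤ A + t ^ 2 * B := by
    have hmono : ∫ x, (2 * t) * f x ∂μ ≤
        ∫ x, (p θ x * (g x - θ)^2 + t ^ 2 * ((p θ₁ x - p θ₂ x)^2 / p θ x)) ∂μ := by
      refine integral_mono_ae (hfint.const_mul (2 * t))
        (hmse.add (hchi_int.const_mul (t ^ 2))) ?_
      filter_upwards [hθpos] with x hx
      show 2 * t * ((p θ₁ x - p θ₂ x) * (g x - θ)) ≤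
        p θ x * (g x - θ) ^ 2 + t ^ 2 * ((p θ₁ x - p θ₂ x) ^ 2 / p θ x)
      set u := p θ₁ x - p θ₂ x with hu
      set v := g x - θ with hv
      set q := p θ x with hqd
      have hq : (0 : ℝ) < q := hx
      clear_value u v q
      rw [← sub_nonneg]
      have hEq : q * v ^ 2 + t ^ 2 * (u ^ 2 / q) - 2 * t * (u * v)
          = (q * v - t * u) ^ 2 / q := by
        field_simp
        ring
      rw [hEq]
      positivity
    rw [integral_const_mul, hC,
      integral_add hmse (hchi_int.const_mul (t ^ 2)), integral_const_mul] at hmono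
    exact hmono
  have hBne : B ≠ 0 := ne_of_gt hchi_pos
  have h1 : 2 * t * (θ₁ - θ₂) = 2 * (θ₁ - θ₂) ^ 2 / B := by
    rw [htdef]; ring
  have h2 : t ^ 2 * B = (θ₁ - θ₂) ^ 2 / B := by
    rw [htdef]; field_simp
  rw [h1, h2] at key
  have : 2 * (θ₁ - θ₂) ^ 2 / B = (θ₁ - θ₂) ^ 2 / B + (θ₁ - θ₂) ^ 2 / B := by ring
  linarith [key, this.symm.le, this.le]
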